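/- In the Hopf algebra of rooted trees, the coproduct Δ is coassociative: (Δ ⊗ id) ∘ Δ = (id ⊗ Δ) ∘ Δ. -/

import Mathlib

open TensorProduct

noncomputable section

/-- The Hopf algebra of rooted trees as a vector space / commutative algebra:
the free commutative `ℚ`-algebra on rooted trees, i.e. the monoid algebra of the
commutative monoid of forests (multisets of trees). -/
abbrev Hrt (T : Type) : Type := AddMonoidAlgebra ℚ (Multiset T)

/-- The basis element of `Hrt T` corresponding to a forest `F`. -/
def frt {T : Type} (F : Multiset T) : Hrt T := AddMonoidAlgebra.single F 1

/-- The basis element of `Hrt T` corresponding to a single rooted tree `t`. -/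
def tre {T : Type} (t : T) : Hrt T := frt {t}

lemma frt_mul {T : Type} (F G : Multiset T) : frt (F + G) = frt F * frt G := by
  simp [frt, AddMonoidAlgebra.single_mul_single]

lemma frt_eq_prod {T : Type} (F : Multiset T) : frt F = (F.map tre).prod := by
  induction F using Multiset.induction_on with
  | empty => simp [frt]; rfl
  | cons t F ih =>
      have h : (t ::ₘ F : Multiset T) = {t} + F := (Multiset.singleton_add t F).symm
      rw [h, frt_mul, ih]
      simp [tre]

lemma single_eq_smul_frt {T : Type} (F : Multiset T) (b : ℚ) :
    (AddMonoidAlgebra.single F b : Hrt T) = b • frt F := by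
  rw [frt, AddMonoidAlgebra.smul_single', mul_one]

set_option maxHeartbeats 1000000 in
set_option synthInstance.maxHeartbeats 400000 in
theorem rootedTree_coproduct_coassoc
    (T : Type) (B : Multiset T → T) (hB : Function.Bijective B)
    (hind : ∀ P : T → Prop,
      (∀ F : Multiset T, (∀ s ∈ F, P s) → P (B F)) → ∀ t, P t)
    (Bp : Hrt T →ₗ[ℚ] Hrt T) (hBp : ∀ F : Multiset T, Bp (frt F) = tre (B F))
    (Δ : Hrt T →ₐ[ℚ] Hrt T ⊗[ℚ] Hrt T)
    (hΔ : ∀ F : Multiset T,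
      Δ (tre (B F)) = tre (B F) ⊗ₜ[ℚ] 1 + (LinearMap.lTensor (Hrt T) Bp) (Δ (frt F))) :
    ∀ a : Hrt T,
      (TensorProduct.assoc ℚ (Hrt T) (Hrt T) (Hrt T))
          ((LinearMap.rTensor (Hrt T) Δ.toLinearMap) (Δ a))
        = (LinearMap.lTensor (Hrt T) Δ.toLinearMap) (Δ a) := by
  classical
  -- the two algebra homomorphisms
  let L : Hrt T →ₐ[ℚ] Hrt T ⊗[ℚ] (Hrt T ⊗[ℚ] Hrt T) :=
    ((Algebra.TensorProduct.assoc ℚ ℚ ℚ (Hrt T) (Hrt T) (Hrt T)).toAlgHom.comp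
      ((Algebra.TensorProduct.map Δ (AlgHom.id ℚ (Hrt T))).comp Δ))
  let R : Hrt T →ₐ[ℚ] Hrt T ⊗[ℚ] (Hrt T ⊗[ℚ] Hrt T) :=
    (Algebra.TensorProduct.map (AlgHom.id ℚ (Hrt T)) Δ).comp Δ
  -- the algebraic and linear versions agree
  have hassoc : ∀ x : (Hrt T ⊗[ℚ] Hrt T) ⊗[ℚ] Hrt T,
      (Algebra.TensorProduct.assoc ℚ ℚ ℚ (Hrt T) (Hrt T) (Hrt T)) x
        = (TensorProduct.assoc ℚ (Hrt T) (Hrt T) (Hrt T)) x := by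
    intro x
    induction x using TensorProduct.induction_on with
    | zero => simp
    | tmul u c =>
        induction u using TensorProduct.induction_on with
        | zero => simp
        | tmul p q => simp [Algebra.TensorProduct.assoc_tmul]
        | add u v hu hv => rw [add_tmul, map_add, map_add, hu, hv]
    | add x y hx hy => rw [map_add, map_add, hx, hy]
  have hmapr : ∀ x : Hrt T ⊗[ℚ] Hrt T,
      (Algebra.TensorProduct.map Δ (AlgHom.id ℚ (Hrt T))) x
        = (LinearMap.rTensor (Hrt T) Δ.toLinearMap) x := by
    intro x
    induction x using TensorProduct.induction_on with
    | zero => simp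
    | tmul a b => simp
    | add x y hx hy => rw [map_add, map_add, hx, hy]
  have hmapl : ∀ x : Hrt T ⊗[ℚ] Hrt T,
      (Algebra.TensorProduct.map (AlgHom.id ℚ (Hrt T)) Δ) x
        = (LinearMap.lTensor (Hrt T) Δ.toLinearMap) x := by
    intro x
    induction x using TensorProduct.induction_on with
    | zero => simp
    | tmul a b => simp
    | add x y hx hy => rw [map_add, map_add, hx, hy]
  have hLa : ∀ a : Hrt T,
      L a = (TensorProduct.assoc ℚ (Hrt T) (Hrt T) (Hrt T))
        ((LinearMap.rTensor (Hrt T) Δ.toLinearMap) (Δ a)) := by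
    intro a
    show (Algebra.TensorProduct.assoc ℚ ℚ ℚ (Hrt T) (Hrt T) (Hrt T))
        ((Algebra.TensorProduct.map Δ (AlgHom.id ℚ (Hrt T))) (Δ a)) = _
    rw [hmapr, hassoc]
  have hRa : ∀ a : Hrt T,
      R a = (LinearMap.lTensor (Hrt T) Δ.toLinearMap) (Δ a) := by
    intro a
    show (Algebra.TensorProduct.map (AlgHom.id ℚ (Hrt T)) Δ) (Δ a) = _
    rw [hmapl]
  -- products
  have hprod : ∀ F : Multiset T,
      (∀ s ∈ F, L (tre s) = R (tre s)) → L (frt F) = R (frt F) := by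
    intro F h
    rw [frt_eq_prod]
    induction F using Multiset.induction_on with
    | empty => exact L.toRingHom.map_one.trans R.toRingHom.map_one.symm
    | cons t F ih =>
        rw [Multiset.map_cons, Multiset.prod_cons]
        exact (map_mul L _ _).trans ((congrArg₂ (· * ·) (h t (Multiset.mem_cons_self t F))
          (ih (fun s hs => h s (Multiset.mem_cons_of_mem hs)))).trans (map_mul R _ _).symm)
  -- the structural identity for Δ ∘ Bp as linear maps
  have hDB : Δ.toLinearMap ∘ₗ Bp
      = ((TensorProduct.mk ℚ (Hrt T) (Hrt T)).flip 1) ∘ₗ Bp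
        + (LinearMap.lTensor (Hrt T) Bp) ∘ₗ Δ.toLinearMap := by
    apply AddMonoidAlgebra.lhom_ext'
    intro F
    apply LinearMap.ext
    intro b
    simp only [LinearMap.comp_apply, AddMonoidAlgebra.lsingle_apply]
    have key : Δ (Bp (frt F)) = (Bp (frt F)) ⊗ₜ[ℚ] 1
        + LinearMap.lTensor (Hrt T) Bp (Δ (frt F)) := by
      rw [hBp]; exact hΔ F
    rw [single_eq_smul_frt]
    simp only [LinearMap.comp_apply, LinearMap.add_apply, map_smul,
      AlgHom.toLinearMap_apply, TensorProduct.mk_apply, LinearMap.flip_apply]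
    exact congrArg (fun z => b • z) key
  -- assoc of a tensor with a fixed last factor
  have hassoc1 : ∀ (u : Hrt T ⊗[ℚ] Hrt T) (c : Hrt T),
      (TensorProduct.assoc ℚ (Hrt T) (Hrt T) (Hrt T)) (u ⊗ₜ[ℚ] c)
        = (LinearMap.lTensor (Hrt T) ((TensorProduct.mk ℚ (Hrt T) (Hrt T)).flip c)) u := by
    intro u c
    induction u using TensorProduct.induction_on with
    | zero => simp
    | tmul p q => simp
    | add u v hu hv => rw [add_tmul, map_add, map_add, hu, hv]
  -- commuting rTensor Δ past lTensor Bp, through assoc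
  have hcomm : ∀ z : Hrt T ⊗[ℚ] Hrt T,
      (TensorProduct.assoc ℚ (Hrt T) (Hrt T) (Hrt T))
          ((LinearMap.rTensor (Hrt T) Δ.toLinearMap) ((LinearMap.lTensor (Hrt T) Bp) z))
        = (LinearMap.lTensor (Hrt T) (LinearMap.lTensor (Hrt T) Bp))
            ((TensorProduct.assoc ℚ (Hrt T) (Hrt T) (Hrt T))
              ((LinearMap.rTensor (Hrt T) Δ.toLinearMap) z)) := by
    intro z
    induction z using TensorProduct.induction_on with
    | zero => simp
    | tmul a b =>
        simp only [LinearMap.lTensor_tmul, LinearMap.rTensor_tmul]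
        generalize (Δ.toLinearMap a) = u
        induction u using TensorProduct.induction_on with
        | zero => simp
        | tmul p q => simp
        | add u v hu hv =>
            rw [add_tmul, add_tmul, map_add, map_add, map_add, hu, hv]
    | add x y hx hy =>
        simp only [map_add, hx, hy]
  -- main induction on trees
  have hkey : ∀ t : T, L (tre t) = R (tre t) := by
    refine hind _ ?_
    intro F ih
    have hwP : (TensorProduct.assoc ℚ (Hrt T) (Hrt T) (Hrt T))
          ((LinearMap.rTensor (Hrt T) Δ.toLinearMap) (Δ (frt F)))
        = (LinearMap.lTensor (Hrt T) Δ.toLinearMap) (Δ (frt F)) := by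
      rw [← hLa, ← hRa]; exact hprod F ih
    rw [hLa, hRa, hΔ F]
    rw [map_add, map_add, map_add]
    -- left-hand side pieces
    simp only [LinearMap.rTensor_tmul, AlgHom.toLinearMap_apply]
    rw [hΔ F, add_tmul, map_add,
      TensorProduct.assoc_tmul, hassoc1, hcomm, hwP]
    -- right-hand side pieces
    rw [LinearMap.lTensor_tmul]
    have hB2 : (LinearMap.lTensor (Hrt T) Δ.toLinearMap)
          ((LinearMap.lTensor (Hrt T) Bp) (Δ (frt F)))
        = (LinearMap.lTensor (Hrt T)
            (((TensorProduct.mk ℚ (Hrt T) (Hrt T)).flip 1))) 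
              ((LinearMap.lTensor (Hrt T) Bp) (Δ (frt F)))
          + (LinearMap.lTensor (Hrt T) (LinearMap.lTensor (Hrt T) Bp))
              ((LinearMap.lTensor (Hrt T) Δ.toLinearMap) (Δ (frt F))) := by
      rw [← LinearMap.comp_apply, ← LinearMap.lTensor_comp, hDB,
        LinearMap.lTensor_add, LinearMap.lTensor_comp, LinearMap.lTensor_comp]
      rfl
    rw [hB2]
    have hone : Δ.toLinearMap (1 : Hrt T) = (1 : Hrt T) ⊗ₜ[ℚ] (1 : Hrt T) := by
      simp [Algebra.TensorProduct.one_def]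
    rw [hone]
    abel
  -- conclusion for all elements
  have hall : L.toLinearMap = R.toLinearMap := by
    apply AddMonoidAlgebra.lhom_ext'
    intro F
    apply LinearMap.ext
    intro b
    simp only [LinearMap.comp_apply, AddMonoidAlgebra.lsingle_apply]
    have h := hprod F (fun s _ => hkey s)
    rw [single_eq_smul_frt]
    simp only [map_smul, AlgHom.toLinearMap_apply]
    exact congrArg (fun z => b • z) h
  intro a
  have h : L a = R a := by
    have := LinearMap.congr_fun hall a
    simpa using this
  rw [hLa, hRa] at h
  exact h

end
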